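/- Let b₁, …, b_ℓ ∈ ℝⁿ, a₁, …, a_ℓ ∈ ℝ, M an m×n integer matrix, c ∈ ℤᵐ. Let X̂ = {x ∈ ℝⁿ : bᵢᵀx + aᵢ ≤ 0 for all i, and Mx ≤ c} and let C = {x ∈ ℝⁿ : bᵢᵀx ≤ 0 for all i, and Mx ≤ 0}. If d ∈ ℤⁿ is orthogonal to C (i.e., dᵀu = 0 for all u ∈ C), then the set {dᵀu : u ∈ X̂} is bounded. -/

import Mathlib

open Finset Topology RealInnerProductSpace

variable {n k : ℕ}

lemma reduce_step (v : Fin k → EuclideanSpace ℝ (Fin n)) (y G : Fin k → ℝ)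
    (hy : ∀ i, 0 ≤ y i) (hG : ∑ i, G i • v i = 0)
    (hsupp : ∀ i, G i ≠ 0 → y i ≠ 0) (i₀ : Fin k) (hi₀ : 0 < G i₀) :
    ∃ z : Fin k → ℝ, (∀ i, 0 ≤ z i) ∧ (∀ i, z i ≠ 0 → y i ≠ 0) ∧
      (∃ j, y j ≠ 0 ∧ z j = 0) ∧ ∑ i, z i • v i = ∑ i, y i • v i := by
  classical
  have hne : (Finset.univ.filter fun i => 0 < G i).Nonempty := ⟨i₀, by simp [hi₀]⟩
  obtain ⟨j, hjmem, hjmin⟩ := Finset.exists_min_image _ (fun i => y i / G i) hne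
  rw [Finset.mem_filter] at hjmem
  have hGj : 0 < G j := hjmem.2
  set τ := y j / G j with hτ
  have hτ0 : 0 ≤ τ := div_nonneg (hy j) hGj.le
  have hkey : ∀ i, 0 ≤ y i - τ * G i := by
    intro i
    rcases le_or_gt (G i) 0 with h | h
    · nlinarith [hy i]
    · have hmin := hjmin i (Finset.mem_filter.mpr ⟨Finset.mem_univ i, h⟩)
      have : τ * G i ≤ y i / G i * G i :=
        mul_le_mul_of_nonneg_right hmin h.le
      rw [div_mul_cancel₀ _ h.ne'] at this
      linarith
  refine ⟨fun i => y i - τ * G i, hkey, ?_, ⟨j, ?_, ?_⟩, ?_⟩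
  · intro i hzi
    intro hyi
    have hGi : G i = 0 := by
      by_contra hGi; exact (hsupp i hGi) hyi
    simp [hyi, hGi] at hzi
  · exact hsupp j hGj.ne'
  · simp only [hτ]; field_simp; ring
  · have : ∑ i, (y i - τ * G i) • v i = ∑ i, y i • v i - τ • ∑ i, G i • v i := by
      rw [Finset.smul_sum, ← Finset.sum_sub_distrib]
      exact Finset.sum_congr rfl fun i _ => by rw [sub_smul, smul_smul]
    rw [this, hG, smul_zero, sub_zero]

lemma carat_aux (v : Fin k → EuclideanSpace ℝ (Fin n)) :
    ∀ N : ℕ, ∀ y : Fin k → ℝ, (∀ i, 0 ≤ y i) →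
      (Finset.univ.filter fun i => y i ≠ 0).card ≤ N →
      ∃ t : Finset (Fin k), (LinearIndependent ℝ (fun i : t => v i)) ∧
        ∃ z : Fin k → ℝ, (∀ i, 0 ≤ z i) ∧ (∀ i, i ∉ t → z i = 0) ∧
          ∑ i, z i • v i = ∑ i, y i • v i := by
  classical
  intro N
  induction N with
  | zero =>
    intro y hy hcard
    have : ∀ i, y i = 0 := by
      intro i
      by_contra h
      have : (Finset.univ.filter fun i => y i ≠ 0).Nonempty := ⟨i, by simp [h]⟩
      have := Finset.card_pos.mpr this
      omega
    refine ⟨∅, linearIndependent_empty_type, y, hy, fun i _ => this i, rfl⟩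
  | succ N ih =>
    intro y hy hcard
    set t₀ := Finset.univ.filter fun i => y i ≠ 0 with ht₀
    by_cases hind : LinearIndependent ℝ (fun i : t₀ => v i)
    · exact ⟨t₀, hind, y, hy, fun i hi => by
        by_contra h; exact hi (Finset.mem_filter.mpr ⟨Finset.mem_univ i, h⟩), rfl⟩
    · -- get a nontrivial relation
      obtain ⟨g, hgsum, ⟨i₁, hi₁⟩⟩ := Fintype.not_linearIndependent_iff.mp hind
      set G : Fin k → ℝ := fun i => if h : i ∈ t₀ then g ⟨i, h⟩ else 0 with hGdef
      have hGsum : ∑ i, G i • v i = 0 := by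
        have h1 : ∑ i, G i • v i = ∑ i ∈ t₀, G i • v i :=
          (Finset.sum_subset (Finset.subset_univ t₀) (fun i _ hi => by simp [hGdef, hi])).symm
        have h2 : ∑ i ∈ t₀, G i • v i = ∑ i : t₀, g i • v (i : Fin k) := by
          rw [← Finset.sum_attach t₀ (fun i => G i • v i), Finset.univ_eq_attach]
          exact Finset.sum_congr rfl fun i _ => by simp [hGdef, i.2]
        rw [h1, h2, hgsum]
      have hGsupp : ∀ i, G i ≠ 0 → y i ≠ 0 := by
        intro i hGi
        by_cases hi : i ∈ t₀
        · exact (Finset.mem_filter.mp hi).2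
        · simp [hGdef, hi] at hGi
      have hGi₁ : G (i₁ : Fin k) ≠ 0 := by
        simpa [hGdef, i₁.2] using hi₁
      -- get z by reduce_step applied to G or -G
      have hz : ∃ z : Fin k → ℝ, (∀ i, 0 ≤ z i) ∧ (∀ i, z i ≠ 0 → y i ≠ 0) ∧
          (∃ j, y j ≠ 0 ∧ z j = 0) ∧ ∑ i, z i • v i = ∑ i, y i • v i := by
        rcases lt_or_gt_of_ne hGi₁ with h | h
        · refine reduce_step v y (-G) hy ?_ (fun i hi => hGsupp i (by simpa using hi)) i₁ (by simpa using h)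
          simp only [Pi.neg_apply, neg_smul, Finset.sum_neg_distrib, hGsum, neg_zero]
        · exact reduce_step v y G hy hGsum hGsupp i₁ h
      obtain ⟨z, hz0, hzsupp, ⟨j, hyj, hzj⟩, hzsum⟩ := hz
      have hsub : (Finset.univ.filter fun i => z i ≠ 0) ⊂ t₀ := by
        constructor
        · intro i hi
          rw [Finset.mem_filter] at hi ⊢
          exact ⟨hi.1, hzsupp i hi.2⟩
        · intro hcon
          have := hcon (Finset.mem_filter.mpr ⟨Finset.mem_univ j, hyj⟩)
          rw [Finset.mem_filter] at this
          exact this.2 hzj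
      have hcard' : (Finset.univ.filter fun i => z i ≠ 0).card ≤ N := by
        have := Finset.card_lt_card hsub
        omega
      obtain ⟨t, hind', w, hw0, hwt, hwsum⟩ := ih z hz0 hcard'
      exact ⟨t, hind', w, hw0, hwt, hwsum.trans hzsum⟩

lemma isClosed_fixed (v : Fin k → EuclideanSpace ℝ (Fin n)) (t : Finset (Fin k))
    (hind : LinearIndependent ℝ (fun i : t => v i)) :
    IsClosed {x : EuclideanSpace ℝ (Fin n) |
      ∃ z : Fin k → ℝ, (∀ i, 0 ≤ z i) ∧ (∀ i, i ∉ t → z i = 0) ∧ x = ∑ i, z i • v i} := by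
  classical
  set φ : (t → ℝ) →ₗ[ℝ] EuclideanSpace ℝ (Fin n) :=
    Fintype.linearCombination ℝ (fun i : t => v i) with hφ
  have hker : LinearMap.ker φ = ⊥ := by
    rw [LinearMap.ker_eq_bot']
    intro c hc
    have := Fintype.linearIndependent_iff.mp hind c (by simpa [hφ, Fintype.linearCombination_apply] using hc)
    funext i; exact this i
  have hemb : IsClosedEmbedding φ := LinearMap.isClosedEmbedding_of_injective hker
  have hset : {x : EuclideanSpace ℝ (Fin n) |
      ∃ z : Fin k → ℝ, (∀ i, 0 ≤ z i) ∧ (∀ i, i ∉ t → z i = 0) ∧ x = ∑ i, z i • v i}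
      = φ '' {c | ∀ i, 0 ≤ c i} := by
    ext x
    simp only [Set.mem_setOf_eq, Set.mem_image, hφ, Fintype.linearCombination_apply]
    constructor
    · rintro ⟨z, hz0, hzt, rfl⟩
      refine ⟨fun i => z i, fun i => hz0 i, ?_⟩
      rw [Finset.univ_eq_attach, Finset.sum_attach t (fun i => z i • v i)]
      exact Finset.sum_subset (Finset.subset_univ t) (fun i _ hi => by simp [hzt i hi])
    · rintro ⟨c, hc, rfl⟩
      refine ⟨fun i => if h : i ∈ t then c ⟨i, h⟩ else 0, ?_, ?_, ?_⟩
      · intro i; dsimp only; split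
        · exact hc _
        · exact le_refl 0
      · intro i hi; simp [hi]
      · rw [← Finset.sum_subset (Finset.subset_univ t)
          (fun i _ hi => by simp [hi] : ∀ i ∈ Finset.univ, i ∉ t → (if h : i ∈ t then c ⟨i, h⟩ else 0) • v i = 0)]
        rw [← Finset.sum_attach t (fun i => (if h : i ∈ t then c ⟨i, h⟩ else 0) • v i), Finset.univ_eq_attach]
        exact Finset.sum_congr rfl fun i _ => by simp [i.2]
  rw [hset]
  apply hemb.isClosedMap
  have : {c : t → ℝ | ∀ i, 0 ≤ c i} = ⋂ i, {c : t → ℝ | 0 ≤ c i} := by ext; simp [Set.mem_iInter]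
  rw [this]
  exact isClosed_iInter fun i => isClosed_le continuous_const (continuous_apply i)

def coneSpan (v : Fin k → EuclideanSpace ℝ (Fin n)) : Set (EuclideanSpace ℝ (Fin n)) :=
  {x | ∃ y : Fin k → ℝ, (∀ i, 0 ≤ y i) ∧ x = ∑ i, y i • v i}

lemma isClosed_coneSpan (v : Fin k → EuclideanSpace ℝ (Fin n)) : IsClosed (coneSpan v) := by
  classical
  have : coneSpan v = ⋃ (t : Finset (Fin k)) (_ : LinearIndependent ℝ (fun i : t => v i)),
      {x : EuclideanSpace ℝ (Fin n) |
        ∃ z : Fin k → ℝ, (∀ i, 0 ≤ z i) ∧ (∀ i, i ∉ t → z i = 0) ∧ x = ∑ i, z i • v i} := by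
    ext x
    simp only [coneSpan, Set.mem_setOf_eq, Set.mem_iUnion]
    constructor
    · rintro ⟨y, hy, rfl⟩
      obtain ⟨t, hind, z, hz0, hzt, hzsum⟩ := carat_aux v _ y hy le_rfl
      exact ⟨t, hind, z, hz0, hzt, hzsum.symm⟩
    · rintro ⟨t, hind, z, hz0, hzt, rfl⟩
      exact ⟨z, hz0, rfl⟩
  rw [this]
  exact isClosed_iUnion_of_finite fun t => isClosed_iUnion_of_finite fun hind =>
    isClosed_fixed v t hind

noncomputable def coneSpanCone (v : Fin k → EuclideanSpace ℝ (Fin n)) : ConvexCone ℝ (EuclideanSpace ℝ (Fin n)) where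
  carrier := coneSpan v
  smul_mem' := by
    rintro c hc x ⟨y, hy, rfl⟩
    exact ⟨fun i => c * y i, fun i => mul_nonneg hc.le (hy i), by
      rw [Finset.smul_sum]; exact Finset.sum_congr rfl fun i _ => by rw [smul_smul]⟩
  add_mem' := by
    rintro x ⟨y, hy, rfl⟩ x' ⟨y', hy', rfl⟩
    exact ⟨fun i => y i + y' i, fun i => add_nonneg (hy i) (hy' i), by
      rw [← Finset.sum_add_distrib]; exact Finset.sum_congr rfl fun i _ => by rw [add_smul]⟩

lemma farkas (v : Fin k → EuclideanSpace ℝ (Fin n)) (d : EuclideanSpace ℝ (Fin n))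
    (h : ∀ u : EuclideanSpace ℝ (Fin n), (∀ i, 0 ≤ ⟪v i, u⟫) → 0 ≤ ⟪d, u⟫) :
    ∃ y : Fin k → ℝ, (∀ i, 0 ≤ y i) ∧ d = ∑ i, y i • v i := by
  classical
  have hne : ((coneSpanCone v : ConvexCone ℝ (EuclideanSpace ℝ (Fin n))) : Set (EuclideanSpace ℝ (Fin n))).Nonempty :=
    ⟨0, ⟨fun _ => 0, fun _ => le_rfl, by simp⟩⟩
  have hcl : IsClosed ((coneSpanCone v : ConvexCone ℝ (EuclideanSpace ℝ (Fin n))) : Set (EuclideanSpace ℝ (Fin n))) :=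
    isClosed_coneSpan v
  by_contra hcon
  let P : ProperCone ℝ (EuclideanSpace ℝ (Fin n)) :=
    { carrier := coneSpan v
      add_mem' := fun ha hb => (coneSpanCone v).add_mem ha hb
      zero_mem' := ⟨fun _ => 0, fun _ => le_rfl, by simp⟩
      smul_mem' := fun c x hx => by
        obtain ⟨y, hy, rfl⟩ := hx
        exact ⟨fun i => c * y i, fun i => mul_nonneg c.2 (hy i), by
          rw [Finset.smul_sum]; exact Finset.sum_congr rfl fun i _ => by
            show (c : ℝ) • y i • v i = ((c : ℝ) * y i) • v i; rw [smul_smul]⟩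
      isClosed' := isClosed_coneSpan v }
  have hd : d ∉ P := fun hd => by
    have hd' : d ∈ coneSpan v := hd
    obtain ⟨y, hy, rfl⟩ := hd'
    exact hcon ⟨y, hy, rfl⟩
  obtain ⟨u, hu, hdu⟩ := ProperCone.hyperplane_separation' P hd
  have := h u (fun i => hu (v i) (show v i ∈ coneSpan v from
    ⟨fun j => if j = i then 1 else 0, fun j => by dsimp only; split <;> norm_num, by simp [Finset.sum_ite_eq']⟩))
  linarith

lemma inner_symm_eq (x : Fin n → ℝ) (u : EuclideanSpace ℝ (Fin n)) :
    ⟪(WithLp.equiv 2 (Fin n → ℝ)).symm x, u⟫ = ∑ i, x i * u i := by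
  simp [PiLp.inner_apply, RCLike.inner_apply, WithLp.equiv_symm_apply, mul_comm]

open Finset in
theorem stmt_5 (n ℓ m : ℕ) (b : Fin ℓ → Fin n → ℝ) (a : Fin ℓ → ℝ)
    (M : Matrix (Fin m) (Fin n) ℤ) (c : Fin m → ℤ)
    (Xhat C : Set (Fin n → ℝ))
    (hXhat : Xhat = {x | (∀ i, (∑ j, b i j * x j) + a i ≤ 0) ∧
                        (∀ i, ∑ j, (M i j : ℝ) * x j ≤ (c i : ℝ))})
    (hC : C = {x | (∀ i, ∑ j, b i j * x j ≤ 0) ∧ (∀ i, ∑ j, (M i j : ℝ) * x j ≤ 0)})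
    (d : Fin n → ℤ) (hortho : ∀ u ∈ C, ∑ i, (d i : ℝ) * u i = 0) :
    ∃ K : ℝ, ∀ u ∈ Xhat, |∑ i, (d i : ℝ) * u i| ≤ K := by
  classical
  subst hXhat hC
  set e := (WithLp.equiv 2 (Fin n → ℝ)).symm with he
  set dv : EuclideanSpace ℝ (Fin n) := e (fun i => (d i : ℝ)) with hdv
  set v : Fin (ℓ + m) → EuclideanSpace ℝ (Fin n) :=
    fun i => Fin.addCases (fun i => e (fun p => -(b i p)))
      (fun j => e (fun p => -(M j p : ℝ))) i with hv
  -- membership in C in terms of inner products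
  have hCiff : ∀ u : EuclideanSpace ℝ (Fin n), (∀ i, 0 ≤ ⟪v i, u⟫) →
      (∀ i, ∑ j, b i j * u j ≤ 0) ∧ (∀ i, ∑ j, (M i j : ℝ) * u j ≤ 0) := by
    intro u hu
    constructor
    · intro i
      have := hu (Fin.castAdd m i)
      rw [hv] at this
      simp only [Fin.addCases_left, he, inner_symm_eq] at this
      have h2 : ∑ j, -(b i j) * u j = -∑ j, b i j * u j := by
        rw [← Finset.sum_neg_distrib]; exact Finset.sum_congr rfl fun j _ => by ring
      rw [h2] at this; linarith
    · intro i
      have := hu (Fin.natAdd ℓ i)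
      rw [hv] at this
      simp only [Fin.addCases_right, he, inner_symm_eq] at this
      have h2 : ∑ j, -(M i j : ℝ) * u j = -∑ j, (M i j : ℝ) * u j := by
        rw [← Finset.sum_neg_distrib]; exact Finset.sum_congr rfl fun j _ => by ring
      rw [h2] at this; linarith
  have horth' : ∀ u : EuclideanSpace ℝ (Fin n), (∀ i, 0 ≤ ⟪v i, u⟫) → ⟪dv, u⟫ = 0 := by
    intro u hu
    rw [hdv, inner_symm_eq]
    exact hortho u (hCiff u hu)
  obtain ⟨y, hy0, hyrep⟩ := farkas v dv (fun u hu => (horth' u hu).ge)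
  obtain ⟨y', hy'0, hy'rep⟩ := farkas v (-dv) (fun u hu => by
    rw [inner_neg_left, horth' u hu, neg_zero])
  -- lower-bound function on rows
  set r : Fin (ℓ + m) → ℝ := fun i => Fin.addCases (fun i => a i) (fun j => -(c j : ℝ)) i with hr
  refine ⟨max (-(∑ i, y' i * r i)) (-(∑ i, y i * r i)), ?_⟩
  rintro u ⟨hub, huM⟩
  set uE : EuclideanSpace ℝ (Fin n) := e u with huE
  have hrow : ∀ i, r i ≤ ⟪v i, uE⟫ := by
    intro i
    refine Fin.addCases ?_ ?_ i
    · intro i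
      rw [hv, hr]
      simp only [Fin.addCases_left, he, inner_symm_eq]
      have := hub i
      have h2 : ∑ j, -(b i j) * uE j = -∑ j, b i j * u j := by
        rw [← Finset.sum_neg_distrib]
        exact Finset.sum_congr rfl fun j _ => by rw [huE, he, WithLp.equiv_symm_apply, WithLp.ofLp_toLp]; ring
      rw [h2]; linarith
    · intro i
      rw [hv, hr]
      simp only [Fin.addCases_right, he, inner_symm_eq]
      have := huM i
      have h2 : ∑ j, -(M i j : ℝ) * uE j = -∑ j, (M i j : ℝ) * u j := by
        rw [← Finset.sum_neg_distrib]
        exact Finset.sum_congr rfl fun j _ => by rw [huE, he, WithLp.equiv_symm_apply, WithLp.ofLp_toLp]; ring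
      rw [h2]; linarith
  have hS : ∑ i, (d i : ℝ) * u i = ⟪dv, uE⟫ := by
    rw [hdv, inner_symm_eq]
    exact Finset.sum_congr rfl fun i _ => by rw [huE, he, WithLp.equiv_symm_apply, WithLp.ofLp_toLp]
  have hlow : ∑ i, y i * r i ≤ ⟪dv, uE⟫ := by
    rw [hyrep, sum_inner]
    refine Finset.sum_le_sum fun i _ => ?_
    rw [real_inner_smul_left]
    exact mul_le_mul_of_nonneg_left (hrow i) (hy0 i)
  have hhigh : ∑ i, y' i * r i ≤ -⟪dv, uE⟫ := by
    have : (-dv : EuclideanSpace ℝ (Fin n)) = ∑ i, y' i • v i := hy'rep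
    calc ∑ i, y' i * r i ≤ ∑ i, y' i * ⟪v i, uE⟫ :=
          Finset.sum_le_sum fun i _ => mul_le_mul_of_nonneg_left (hrow i) (hy'0 i)
      _ = ⟪-dv, uE⟫ := by
          rw [this, sum_inner]
          exact Finset.sum_congr rfl fun i _ => (real_inner_smul_left _ _ _).symm
      _ = -⟪dv, uE⟫ := by rw [inner_neg_left]
  rw [hS, abs_le]
  constructor
  · have := le_max_right (-(∑ i, y' i * r i)) (-(∑ i, y i * r i))
    linarith
  · have := le_max_left (-(∑ i, y' i * r i)) (-(∑ i, y i * r i))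
    linarith
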